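/- Let β be a mixed base, m ≥ 1, and let 𝒞 ⊆ ℕ^m be a set satisfying: for all X ∈ ℕ^m and all h < σ_β(X), there is C ∈ 𝒞 with X - C ∈ ℕ^m and σ_β(X - C) = h (adequate covering). Let X ∈ ℕ^m, n = σ_β(X), h ≠ n, and N = max{L : n_L ≠ h_L}. If Σ_i x^i_N ≥ β_N - 1, then there is C ∈ 𝒞 with X - C ∈ ℕ^m and σ_β(X - C) = h. -/

import Mathlib

open scoped BigOperators

/-- β̂_L = β_0 ⋯ β_{L-1}, the place value of digit L in mixed base β. -/
def bhat (β : ℕ → ℕ) (L : ℕ) : ℕ := ∏ i ∈ Finset.range L, β i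

/-- The L-th digit of n in the mixed base β. -/
def mdigit (β : ℕ → ℕ) (n L : ℕ) : ℕ := n / bhat β L % β L

/-- Digit-wise addition modulo β_L in mixed base β. -/
def moplus (β : ℕ → ℕ) (n h : ℕ) : ℕ :=
  ∑ L ∈ Finset.range (n + h + 1), ((mdigit β n L + mdigit β h L) % β L) * bhat β L

/-- Digit-wise subtraction modulo β_L in mixed base β. -/
def mominus (β : ℕ → ℕ) (n h : ℕ) : ℕ :=
  ∑ L ∈ Finset.range (n + h + 1), ((β L + mdigit β n L - mdigit β h L) % β L) * bhat β L

/-- σ_β(X) = x^0 ⊕ ⋯ ⊕ x^{m-1}: the digit-wise Nim sum in mixed base β. -/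
def msigma (β : ℕ → ℕ) {m : ℕ} (X : Fin m → ℕ) : ℕ :=
  ∑ L ∈ Finset.range (∑ i, X i + 1), ((∑ i, mdigit β (X i) L) % β L) * bhat β L

/-- Hamming weight: number of nonzero components. -/
def hamwt {m : ℕ} (C : Fin m → ℕ) : ℕ := (Finset.univ.filter (fun i => C i ≠ 0)).card

/-- ord_β(n): the largest L with β̂_L ∣ n (⊤ for n = 0). -/
def mord (β : ℕ → ℕ) (n : ℕ) : ℕ∞ :=
  if n = 0 then ⊤ else (Nat.findGreatest (fun L => bhat β L ∣ n) n : ℕ∞)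

/-- 𝒞 is a Sprague-Grundy system of σ_β: its members are nonzero moves and
σ_β satisfies the mex recursion of the take-away game Γ(ℕ^m, 𝒞), i.e. σ_β is the
Sprague-Grundy function of that game. -/
def IsSGSystem (β : ℕ → ℕ) {m : ℕ} (𝒞 : Set (Fin m → ℕ)) : Prop :=
  (∀ C ∈ 𝒞, C ≠ 0) ∧
  ∀ X : Fin m → ℕ, msigma β X =
    sInf {n : ℕ | ∀ C ∈ 𝒞, (∀ i, C i ≤ X i) → msigma β (fun i => X i - C i) ≠ n}

section Helpers

variable {β : ℕ → ℕ}

lemma bhat_pos (hβ : ∀ L, 2 ≤ β L) (L : ℕ) : 0 < bhat β L :=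
  Finset.prod_pos fun i _ => by have := hβ i; omega

lemma bhat_succ (β : ℕ → ℕ) (L : ℕ) : bhat β (L + 1) = bhat β L * β L :=
  Finset.prod_range_succ β L

lemma bhat_factor {R L : ℕ} (h : R ≤ L) :
    bhat β L = bhat β R * ∏ i ∈ Finset.Ico R L, β i :=
  (Finset.prod_range_mul_prod_Ico β h).symm

lemma two_pow_le_bhat (hβ : ∀ L, 2 ≤ β L) (L : ℕ) : 2 ^ L ≤ bhat β L := by
  induction L with
  | zero => simp [bhat]
  | succ L ih =>
    rw [pow_succ, bhat_succ]
    exact Nat.mul_le_mul ih (hβ L)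

lemma lt_bhat (hβ : ∀ L, 2 ≤ β L) {x L : ℕ} (h : x < L) : x < bhat β L :=
  lt_of_lt_of_le (lt_trans h (Nat.lt_two_pow_self (n := L))) (two_pow_le_bhat hβ L)

lemma bhat_mono (hβ : ∀ L, 2 ≤ β L) {R L : ℕ} (h : R ≤ L) : bhat β R ≤ bhat β L := by
  rw [bhat_factor h]
  exact Nat.le_mul_of_pos_right _ (Finset.prod_pos fun i _ => by have := hβ i; omega)

lemma mdigit_lt (hβ : ∀ L, 2 ≤ β L) (x L : ℕ) : mdigit β x L < β L :=
  Nat.mod_lt _ (by have := hβ L; omega)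

lemma mdigit_eq_zero (hβ : ∀ L, 2 ≤ β L) {x L : ℕ} (h : x < bhat β L) :
    mdigit β x L = 0 := by
  unfold mdigit
  rw [Nat.div_eq_of_lt h, Nat.zero_mod]

lemma mdigit_add_mul_bhat (hβ : ∀ L, 2 ≤ β L) (a k : ℕ) {L R : ℕ} (hLR : L < R) :
    mdigit β (a + k * bhat β R) L = mdigit β a L := by
  have h1 : bhat β R = bhat β L * (β L * ∏ i ∈ Finset.Ico (L+1) R, β i) := by
    rw [bhat_factor (le_of_lt hLR), Finset.prod_eq_prod_Ico_succ_bot hLR]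
  unfold mdigit
  rw [h1, show a + k * (bhat β L * (β L * ∏ i ∈ Finset.Ico (L+1) R, β i))
      = a + (k * (β L * ∏ i ∈ Finset.Ico (L+1) R, β i)) * bhat β L by ring,
    Nat.add_mul_div_right _ _ (bhat_pos hβ L),
    show a / bhat β L + k * (β L * ∏ i ∈ Finset.Ico (L+1) R, β i)
      = a / bhat β L + β L * (k * ∏ i ∈ Finset.Ico (L+1) R, β i) by ring,
    Nat.add_mul_mod_self_left]

lemma mdigit_mod_bhat (hβ : ∀ L, 2 ≤ β L) (x : ℕ) {L R : ℕ} (hLR : L < R) :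
    mdigit β (x % bhat β R) L = mdigit β x L := by
  conv_rhs => rw [← Nat.mod_add_div' x (bhat β R)]
  rw [mdigit_add_mul_bhat hβ _ _ hLR]

lemma mdigit_add_bhat_mul (hβ : ∀ L, 2 ≤ β L) {a R : ℕ} (ha : a < bhat β R) (k : ℕ)
    {L : ℕ} (hRL : R ≤ L) :
    mdigit β (a + bhat β R * k) L = mdigit β (bhat β R * k) L := by
  unfold mdigit
  rw [bhat_factor hRL, ← Nat.div_div_eq_div_mul, ← Nat.div_div_eq_div_mul,
    Nat.add_mul_div_left _ _ (bhat_pos hβ R), Nat.div_eq_of_lt ha, Nat.zero_add,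
    Nat.mul_div_cancel_left _ (bhat_pos hβ R)]

lemma sum_lt_bhat (hβ : ∀ L, 2 ≤ β L) (c : ℕ → ℕ) (hc : ∀ L, c L < β L) (R : ℕ) :
    ∑ L ∈ Finset.range R, c L * bhat β L < bhat β R := by
  induction R with
  | zero => simp [bhat]
  | succ R ih =>
    rw [Finset.sum_range_succ, bhat_succ]
    have h1 : c R + 1 ≤ β R := hc R
    calc ∑ L ∈ Finset.range R, c L * bhat β L + c R * bhat β R
        < bhat β R + c R * bhat β R := by omega
      _ = (c R + 1) * bhat β R := by ring
      _ ≤ β R * bhat β R := Nat.mul_le_mul_right _ h1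
      _ = bhat β R * β R := Nat.mul_comm _ _

lemma mdigit_sum_rep (hβ : ∀ L, 2 ≤ β L) (c : ℕ → ℕ) (hc : ∀ L, c L < β L)
    {R K : ℕ} (hK : K < R) :
    mdigit β (∑ L ∈ Finset.range R, c L * bhat β L) K = c K := by
  have hsplit : ∑ L ∈ Finset.range R, c L * bhat β L
      = ∑ L ∈ Finset.range K, c L * bhat β L + ∑ L ∈ Finset.Ico K R, c L * bhat β L := by
    rw [Finset.range_eq_Ico, Finset.range_eq_Ico]
    exact (Finset.sum_Ico_consecutive _ (Nat.zero_le K) (le_of_lt hK)).symm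
  have hterm : ∀ L ∈ Finset.Ico K R, c L * bhat β L
      = (c L * ∏ i ∈ Finset.Ico K L, β i) * bhat β K := by
    intro L hL
    rw [Finset.mem_Ico] at hL
    rw [bhat_factor hL.1]; ring
  have hhigh : ∑ L ∈ Finset.Ico K R, c L * bhat β L
      = (∑ L ∈ Finset.Ico K R, c L * ∏ i ∈ Finset.Ico K L, β i) * bhat β K := by
    rw [Finset.sum_mul]
    exact Finset.sum_congr rfl hterm
  have hlow : ∑ L ∈ Finset.range K, c L * bhat β L < bhat β K := sum_lt_bhat hβ c hc K
  unfold mdigit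
  rw [hsplit, hhigh, Nat.add_mul_div_right _ _ (bhat_pos hβ K), Nat.div_eq_of_lt hlow,
    Nat.zero_add]
  -- now (∑ L ∈ Ico K R, c L * ∏ ...) % β K = c K
  rw [Finset.sum_eq_sum_Ico_succ_bot hK]
  have hKK : ∏ i ∈ Finset.Ico K K, β i = 1 := by simp
  have hterm2 : ∀ L ∈ Finset.Ico (K+1) R, c L * ∏ i ∈ Finset.Ico K L, β i
      = β K * (c L * ∏ i ∈ Finset.Ico (K+1) L, β i) := by
    intro L hL
    rw [Finset.mem_Ico] at hL
    rw [Finset.prod_eq_prod_Ico_succ_bot (by omega : K < L)]; ring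
  rw [Finset.sum_congr rfl hterm2, ← Finset.mul_sum, hKK, mul_one,
    Nat.add_mul_mod_self_left, Nat.mod_eq_of_lt (hc K)]

lemma expand_digits (hβ : ∀ L, 2 ≤ β L) (x R : ℕ) :
    x = (∑ L ∈ Finset.range R, mdigit β x L * bhat β L) + bhat β R * (x / bhat β R) := by
  induction R with
  | zero => simp [bhat]
  | succ R ih =>
    rw [Finset.sum_range_succ]
    have h2 : bhat β R * (x / bhat β R)
        = mdigit β x R * bhat β R + bhat β (R+1) * (x / bhat β (R+1)) := by
      have h3 : x / bhat β (R+1) = x / bhat β R / β R := by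
        rw [bhat_succ, Nat.div_div_eq_div_mul]
      rw [h3, bhat_succ]
      unfold mdigit
      calc bhat β R * (x / bhat β R)
          = bhat β R * (β R * (x / bhat β R / β R) + x / bhat β R % β R) := by
            rw [Nat.div_add_mod]
        _ = x / bhat β R % β R * bhat β R + bhat β R * β R * (x / bhat β R / β R) := by
            ring
    omega

lemma eq_of_mdigit_eq (hβ : ∀ L, 2 ≤ β L) {a b : ℕ}
    (h : ∀ L, mdigit β a L = mdigit β b L) : a = b := by
  set R := a + b + 1 with hR
  have ha : a < bhat β R := lt_bhat hβ (by omega)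
  have hb : b < bhat β R := lt_bhat hβ (by omega)
  have ea := expand_digits hβ a R
  have eb := expand_digits hβ b R
  rw [Nat.div_eq_of_lt ha, Nat.mul_zero] at ea
  rw [Nat.div_eq_of_lt hb, Nat.mul_zero] at eb
  rw [ea, eb]
  simp only [Nat.add_zero]
  exact Finset.sum_congr rfl fun L _ => by rw [h L]

lemma mdigit_msigma (hβ : ∀ L, 2 ≤ β L) {m : ℕ} (Z : Fin m → ℕ) (K : ℕ) :
    mdigit β (msigma β Z) K = (∑ i, mdigit β (Z i) K) % β K := by
  unfold msigma
  have hc : ∀ L, (∑ i, mdigit β (Z i) L) % β L < β L :=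
    fun L => Nat.mod_lt _ (by have := hβ L; omega)
  by_cases hK : K < ∑ i, Z i + 1
  · exact mdigit_sum_rep hβ _ hc hK
  · push_neg at hK
    have h1 : ∑ L ∈ Finset.range (∑ i, Z i + 1), ((∑ i, mdigit β (Z i) L) % β L) * bhat β L
        < bhat β K :=
      lt_of_lt_of_le (sum_lt_bhat hβ _ hc _) (bhat_mono hβ hK)
    rw [mdigit_eq_zero hβ h1]
    have h2 : ∀ i : Fin m, mdigit β (Z i) K = 0 := by
      intro i
      refine mdigit_eq_zero hβ (lt_of_le_of_lt ?_ (lt_bhat hβ (by omega : ∑ i, Z i < K)))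
      exact Finset.single_le_sum (fun j _ => Nat.zero_le _) (Finset.mem_univ i)
    simp [h2]

lemma exists_sub_sum {ι : Type*} [DecidableEq ι] (s : Finset ι) (f : ι → ℕ) :
    ∀ t : ℕ, t ≤ ∑ i ∈ s, f i → ∃ e : ι → ℕ, (∀ i, e i ≤ f i) ∧ ∑ i ∈ s, e i = t := by
  induction s using Finset.induction_on with
  | empty =>
    intro t ht
    simp only [Finset.sum_empty, Nat.le_zero] at ht
    exact ⟨fun _ => 0, fun i => Nat.zero_le _, by simp [ht]⟩
  | insert _ _ ha =>
    rename_i a s' ih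
    intro t ht
    rw [Finset.sum_insert ha] at ht
    obtain ⟨e, he1, he2⟩ := ih (t - min t (f a)) (by omega)
    refine ⟨fun i => if i = a then min t (f a) else e i, ?_, ?_⟩
    · intro i
      by_cases hi : i = a
      · simp [hi]
      · simpa [hi] using he1 i
    · rw [Finset.sum_insert ha, if_pos rfl,
        Finset.sum_congr rfl (fun i hi => if_neg (by rintro rfl; exact ha hi)), he2]
      omega

end Helpers

/-- If 𝒞 adequately covers and Σ_i x^i_N ≥ β_N - 1, then 𝒞 covers X at h even
when h > n, where N is the top digit where n and h differ. -/


theorem stmt9 (β : ℕ → ℕ) (hβ : ∀ L, 2 ≤ β L) {m : ℕ} (hm : 1 ≤ m)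
    (𝒞 : Set (Fin m → ℕ))
    (hcov : ∀ X : Fin m → ℕ, ∀ h < msigma β X,
      ∃ C ∈ 𝒞, (∀ i, C i ≤ X i) ∧ msigma β (fun i => X i - C i) = h)
    (X : Fin m → ℕ) (n h N : ℕ) (hn : n = msigma β X) (hne : h ≠ n)
    (hN : mdigit β n N ≠ mdigit β h N)
    (hNmax : ∀ L, N < L → mdigit β n L = mdigit β h L)
    (hsum : β N - 1 ≤ ∑ i, mdigit β (X i) N) :
    ∃ C ∈ 𝒞, (∀ i, C i ≤ X i) ∧ msigma β (fun i => X i - C i) = h := by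
  have hb2 : 2 ≤ β N := hβ N
  have hBpos : 0 < bhat β N := bhat_pos hβ N
  set s : ℕ := ∑ i, mdigit β (X i) N with hsdef
  have hnd : mdigit β n N = s % β N := by rw [hn, mdigit_msigma hβ]
  have hhN : mdigit β h N < β N := mdigit_lt hβ h N
  obtain ⟨e, he_le, he_sum⟩ := exists_sub_sum Finset.univ
    (fun i => mdigit β (X i) N) (β N - 1) hsum
  set Y : Fin m → ℕ := fun i => X i % bhat β N + e i * bhat β N with hYdef
  set v : ℕ := mdigit β h N + (β N - 1) * (s + 1) with hvdef
  set tN : ℕ := v % β N with htNdef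
  set t : ℕ := h % bhat β N + tN * bhat β N with htdef
  have htNlt : tN < β N := Nat.mod_lt _ (by omega)
  -- the cast of β N - 1 is -1
  have hc1 : ((β N - 1 : ℕ) : ZMod (β N)) = -1 := by
    have h0 : ((β N - 1) + 1 : ℕ) = β N := by omega
    have h2 : (((β N - 1) + 1 : ℕ) : ZMod (β N)) = 0 := by
      rw [h0, ZMod.natCast_self]
    push_cast at h2
    linear_combination h2
  -- digits of Y at N are e i
  have hYd : ∀ i, mdigit β (Y i) N = e i := by
    intro i
    have h1 : X i % bhat β N < bhat β N := Nat.mod_lt _ hBpos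
    show (X i % bhat β N + e i * bhat β N) / bhat β N % β N = e i
    rw [Nat.add_mul_div_right _ _ hBpos, Nat.div_eq_of_lt h1, Nat.zero_add,
      Nat.mod_eq_of_lt (lt_of_le_of_lt (he_le i) (mdigit_lt hβ _ N))]
  -- σ(Y) digit N is β N - 1
  have hYσN : mdigit β (msigma β Y) N = β N - 1 := by
    rw [mdigit_msigma hβ, Finset.sum_congr rfl (fun i _ => hYd i), he_sum,
      Nat.mod_eq_of_lt (by omega)]
  have hlow : (β N - 1) * bhat β N ≤ msigma β Y :=
    calc (β N - 1) * bhat β N = mdigit β (msigma β Y) N * bhat β N := by rw [hYσN]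
      _ ≤ (msigma β Y / bhat β N) * bhat β N :=
          Nat.mul_le_mul_right _ (Nat.mod_le _ _)
      _ ≤ msigma β Y := Nat.div_mul_le_self _ _
  -- tN ≠ β N - 1
  have htNne : tN ≠ β N - 1 := by
    intro hcontra
    apply hN
    rw [hnd]
    have hv1 : ((v : ℕ) : ZMod (β N)) = ((β N - 1 : ℕ) : ZMod (β N)) := by
      rw [ZMod.natCast_eq_natCast_iff]
      show v % β N = (β N - 1) % β N
      rw [← htNdef, hcontra, Nat.mod_eq_of_lt (by omega)]
    have hv2 : ((mdigit β h N : ℕ) : ZMod (β N)) = ((s : ℕ) : ZMod (β N)) := by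
      have : ((v : ℕ) : ZMod (β N))
          = (mdigit β h N : ZMod (β N)) + ((β N - 1 : ℕ) : ZMod (β N)) * ((s : ZMod (β N)) + 1) := by
        rw [hvdef]; push_cast; ring
      rw [this, hc1] at hv1
      linear_combination hv1
    have := (ZMod.natCast_eq_natCast_iff _ _ _).mp hv2
    rw [Nat.ModEq] at this
    rw [← this, Nat.mod_eq_of_lt hhN]
  -- t < σ(Y)
  have ht_lt : t < msigma β Y := by
    have h1 : h % bhat β N < bhat β N := Nat.mod_lt _ hBpos
    have h2 : t < (tN + 1) * bhat β N := by
      have : (tN + 1) * bhat β N = tN * bhat β N + bhat β N := by ring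
      show h % bhat β N + tN * bhat β N < _
      omega
    have h3 : (tN + 1) * bhat β N ≤ (β N - 1) * bhat β N :=
      Nat.mul_le_mul_right _ (by omega)
    omega
  obtain ⟨C, hC𝒞, hCle, hCσ⟩ := hcov Y t ht_lt
  -- C ≤ X
  have hYleX : ∀ i, Y i ≤ X i := by
    intro i
    have h1 : X i % bhat β N + (X i / bhat β N) * bhat β N = X i := Nat.mod_add_div' _ _
    have h2 : e i * bhat β N ≤ (X i / bhat β N) * bhat β N :=
      Nat.mul_le_mul_right _ (le_trans (he_le i) (Nat.mod_le _ _))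
    show X i % bhat β N + e i * bhat β N ≤ X i
    omega
  have hCX : ∀ i, C i ≤ X i := fun i => le_trans (hCle i) (hYleX i)
  refine ⟨C, hC𝒞, hCX, ?_⟩
  -- decomposition of X i
  have hX_decomp : ∀ i, X i = X i % bhat β N + mdigit β (X i) N * bhat β N
      + bhat β (N+1) * (X i / bhat β (N+1)) := by
    intro i
    have h3 : X i / bhat β (N+1) = X i / bhat β N / β N := by
      rw [bhat_succ, Nat.div_div_eq_div_mul]
    calc X i = X i % bhat β N + (X i / bhat β N) * bhat β N :=
          (Nat.mod_add_div' _ _).symm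
      _ = X i % bhat β N
          + (β N * (X i / bhat β N / β N) + X i / bhat β N % β N) * bhat β N := by
          rw [Nat.div_add_mod]
      _ = X i % bhat β N + mdigit β (X i) N * bhat β N
          + bhat β (N+1) * (X i / bhat β (N+1)) := by
          rw [h3, bhat_succ]
          unfold mdigit
          ring
  -- key decomposition of X i - C i
  have hXC : ∀ i, X i - C i = (Y i - C i) + (mdigit β (X i) N - e i) * bhat β N
      + bhat β (N+1) * (X i / bhat β (N+1)) := by
    intro i
    have h1 := hX_decomp i
    have h2 : (mdigit β (X i) N - e i) * bhat β N
        = mdigit β (X i) N * bhat β N - e i * bhat β N := Nat.sub_mul _ _ _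
    have h3 : e i * bhat β N ≤ mdigit β (X i) N * bhat β N :=
      Nat.mul_le_mul_right _ (he_le i)
    have h4 := hCle i
    have h5 : Y i = X i % bhat β N + e i * bhat β N := rfl
    omega
  -- bound: Y i - C i < (e i + 1) * β̂_N
  have hZlt : ∀ i, Y i - C i < (e i + 1) * bhat β N := by
    intro i
    have h1 : X i % bhat β N < bhat β N := Nat.mod_lt _ hBpos
    have h2 : Y i - C i ≤ Y i := Nat.sub_le _ _
    have h3 : Y i = X i % bhat β N + e i * bhat β N := rfl
    have h4 : (e i + 1) * bhat β N = e i * bhat β N + bhat β N := by ring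
    omega
  have hZdiv : ∀ i, (Y i - C i) / bhat β N ≤ e i := by
    intro i
    have := (Nat.div_lt_iff_lt_mul hBpos).mpr (hZlt i)
    omega
  -- the "carry-free front" bound
  have hW_lt : ∀ i, (Y i - C i) + (mdigit β (X i) N - e i) * bhat β N < bhat β (N+1) := by
    intro i
    have h5 := hZlt i
    have h7 : e i + 1 + (mdigit β (X i) N - e i) = mdigit β (X i) N + 1 := by
      have := he_le i; omega
    have h8 : (e i + 1) * bhat β N + (mdigit β (X i) N - e i) * bhat β N
        = (mdigit β (X i) N + 1) * bhat β N := by rw [← Nat.add_mul, h7]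
    have h9 : (mdigit β (X i) N + 1) * bhat β N ≤ bhat β (N+1) := by
      rw [bhat_succ, Nat.mul_comm (bhat β N) (β N)]
      exact Nat.mul_le_mul_right _ (mdigit_lt hβ _ _)
    omega
  -- digit computations for X i - C i
  have hdig_lt : ∀ i, ∀ L, L < N → mdigit β (X i - C i) L = mdigit β (Y i - C i) L := by
    intro i L hL
    have hrw : X i - C i = (Y i - C i)
        + ((mdigit β (X i) N - e i) + β N * (X i / bhat β (N+1))) * bhat β N := by
      rw [hXC i, bhat_succ]; ring
    rw [hrw, mdigit_add_mul_bhat hβ _ _ hL]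
  have hdig_N : ∀ i, mdigit β (X i - C i) N
      = mdigit β (Y i - C i) N + (mdigit β (X i) N - e i) := by
    intro i
    have hrw : X i - C i = (Y i - C i)
        + ((mdigit β (X i) N - e i) + β N * (X i / bhat β (N+1))) * bhat β N := by
      rw [hXC i, bhat_succ]; ring
    have hu : (Y i - C i) / bhat β N + (mdigit β (X i) N - e i) < β N := by
      have := mdigit_lt hβ (X i) N
      have := he_le i
      have := hZdiv i
      omega
    show (X i - C i) / bhat β N % β N = (Y i - C i) / bhat β N % β N + _
    rw [hrw, Nat.add_mul_div_right _ _ hBpos,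
      show (Y i - C i) / bhat β N + ((mdigit β (X i) N - e i) + β N * (X i / bhat β (N+1)))
        = ((Y i - C i) / bhat β N + (mdigit β (X i) N - e i))
          + β N * (X i / bhat β (N+1)) by ring,
      Nat.add_mul_mod_self_left, Nat.mod_eq_of_lt hu,
      Nat.mod_eq_of_lt (show (Y i - C i) / bhat β N < β N by
        have := hZdiv i; have := he_le i; have := mdigit_lt hβ (X i) N; omega)]
  have hdig_gt : ∀ i, ∀ L, N < L → mdigit β (X i - C i) L = mdigit β (X i) L := by
    intro i L hL
    have hR : N + 1 ≤ L := hL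
    have hrw : X i - C i = ((Y i - C i) + (mdigit β (X i) N - e i) * bhat β N)
        + bhat β (N+1) * (X i / bhat β (N+1)) := by
      rw [hXC i]
    rw [hrw, mdigit_add_bhat_mul hβ (hW_lt i) _ hR]
    conv_rhs => rw [show X i = X i % bhat β (N+1)
      + bhat β (N+1) * (X i / bhat β (N+1)) from (Nat.mod_add_div _ _).symm]
    rw [mdigit_add_bhat_mul hβ (Nat.mod_lt _ (bhat_pos hβ _)) _ hR]
  -- digits of t
  have htd_lt : ∀ L, L < N → mdigit β t L = mdigit β h L := by
    intro L hL
    show mdigit β (h % bhat β N + tN * bhat β N) L = mdigit β h L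
    rw [mdigit_add_mul_bhat hβ _ _ hL, mdigit_mod_bhat hβ _ hL]
  have htd_N : mdigit β t N = tN := by
    show (h % bhat β N + tN * bhat β N) / bhat β N % β N = tN
    rw [Nat.add_mul_div_right _ _ hBpos, Nat.div_eq_of_lt (Nat.mod_lt _ hBpos),
      Nat.zero_add, Nat.mod_eq_of_lt htNlt]
  -- final digit comparison
  apply eq_of_mdigit_eq hβ
  intro L
  rw [mdigit_msigma hβ]
  rcases lt_trichotomy L N with hL | hL | hL
  · rw [Finset.sum_congr rfl (fun i _ => hdig_lt i L hL)]
    have hms := mdigit_msigma hβ (fun i => Y i - C i) L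
    simp only [hCσ] at hms
    rw [← hms, htd_lt L hL]
  · subst hL
    rw [Finset.sum_congr rfl (fun i _ => hdig_N i), Finset.sum_add_distrib]
    have hsub : ∑ i, (mdigit β (X i) L - e i) = s - (β L - 1) := by
      have h1 : ∑ i, (mdigit β (X i) L - e i) + ∑ i, e i = s := by
        rw [← Finset.sum_add_distrib, hsdef]
        exact Finset.sum_congr rfl fun i _ => by have := he_le i; omega
      omega
    rw [hsub]
    -- A := ∑ mdigit (Y i - C i) L  satisfies A % β L = tN
    have hA : (∑ i, mdigit β (Y i - C i) L) % β L = tN := by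
      have hms := mdigit_msigma hβ (fun i => Y i - C i) L
      simp only [hCσ] at hms
      rw [← hms, htd_N]
    set A : ℕ := ∑ i, mdigit β (Y i - C i) L with hAdef
    -- goal : (A + (s - (β L - 1))) % β L = mdigit β h L
    have hx : (A + (s - (β L - 1))) + (β L - 1) = A + s := by omega
    have hcast : ((A + (s - (β L - 1)) : ℕ) : ZMod (β L))
        = ((mdigit β h L : ℕ) : ZMod (β L)) := by
      have h1 : ((A + (s - (β L - 1)) : ℕ) : ZMod (β L)) + ((β L - 1 : ℕ) : ZMod (β L))
          = ((A : ℕ) : ZMod (β L)) + ((s : ℕ) : ZMod (β L)) := by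
        rw [← Nat.cast_add, ← Nat.cast_add, hx]
      have h2 : ((A : ℕ) : ZMod (β L)) = ((v : ℕ) : ZMod (β L)) := by
        rw [ZMod.natCast_eq_natCast_iff]
        show A % β L = v % β L
        rw [hA, htNdef]
      have h3 : ((v : ℕ) : ZMod (β L))
          = (mdigit β h L : ZMod (β L))
            + ((β L - 1 : ℕ) : ZMod (β L)) * ((s : ZMod (β L)) + 1) := by
        rw [hvdef]; push_cast; ring
      rw [h2, h3, hc1] at h1
      linear_combination h1
    have hmeq := (ZMod.natCast_eq_natCast_iff _ _ _).mp hcast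
    rw [Nat.ModEq] at hmeq
    rw [hmeq, Nat.mod_eq_of_lt hhN]
  · rw [Finset.sum_congr rfl (fun i _ => hdig_gt i L hL)]
    have hms := mdigit_msigma hβ X L
    rw [← hms, ← hn]
    exact hNmax L hL
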